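/- With X_b(m) and X_c(m) defined by the recursions X_b(m) = [[X_b(m-1), X_b(m-1)], [X_b(m-1), 0]], X_c(m) = [[X_c(m-1), X_c(m-1)], [X_c(m-1), -X_c(m-1)]], X_b(0) = X_c(0) = (1), the matrix A_m := X_b(m)⁻¹ · X_c(m) satisfies A_0 = (1) and A_m = [[A_{m-1}, -A_{m-1}], [0, 2·A_{m-1}]] for all m ≥ 1. -/

import Mathlib

open Matrix Finset

def blockEquiv (m : ℕ) : Fin (2 ^ m) ⊕ Fin (2 ^ m) ≃ Fin (2 ^ (m + 1)) :=
  finSumFinEquiv.trans (finCongr (by rw [pow_succ, mul_two]))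

def Xb : (m : ℕ) → Matrix (Fin (2 ^ m)) (Fin (2 ^ m)) ℚ
  | 0 => 1
  | m + 1 =>
      Matrix.reindex (blockEquiv m) (blockEquiv m)
        (Matrix.fromBlocks (Xb m) (Xb m) (Xb m) 0)

def Xc : (m : ℕ) → Matrix (Fin (2 ^ m)) (Fin (2 ^ m)) ℚ
  | 0 => 1
  | m + 1 =>
      Matrix.reindex (blockEquiv m) (blockEquiv m)
        (Matrix.fromBlocks (Xc m) (Xc m) (Xc m) (-(Xc m)))

/-- The association matrix linking baseline and centered least-squares estimators. -/
noncomputable def assoc (m : ℕ) : Matrix (Fin (2 ^ m)) (Fin (2 ^ m)) ℚ := (Xb m)⁻¹ * Xc m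

lemma reindex_mul {m : ℕ} (M N : Matrix (Fin (2^m) ⊕ Fin (2^m)) (Fin (2^m) ⊕ Fin (2^m)) ℚ) :
    (Matrix.reindex (blockEquiv m) (blockEquiv m) M) *
      (Matrix.reindex (blockEquiv m) (blockEquiv m) N) =
    Matrix.reindex (blockEquiv m) (blockEquiv m) (M * N) := by
  simp [Matrix.reindex_apply, Matrix.submatrix_mul_equiv]

lemma xb_isUnit : ∀ m : ℕ, IsUnit (Xb m).det := by
  intro m
  induction m with
  | zero => simp [Xb]
  | succ m ih =>
    have hinv : Xb m * (Xb m)⁻¹ = 1 := Matrix.mul_nonsing_inv _ ih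
    have h1 : Matrix.fromBlocks (Xb m) (Xb m) (Xb m) (0 : Matrix (Fin (2^m)) (Fin (2^m)) ℚ) *
        Matrix.fromBlocks 0 (Xb m)⁻¹ (Xb m)⁻¹ (-(Xb m)⁻¹) = 1 := by
      rw [Matrix.fromBlocks_multiply]
      simp [hinv, Matrix.mul_neg, ← Matrix.fromBlocks_one]
    have hdet : (Matrix.fromBlocks (Xb m) (Xb m) (Xb m)
        (0 : Matrix (Fin (2^m)) (Fin (2^m)) ℚ)).det *
        (Matrix.fromBlocks 0 (Xb m)⁻¹ (Xb m)⁻¹ (-(Xb m)⁻¹)).det = 1 := by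
      rw [← Matrix.det_mul, h1, Matrix.det_one]
    rw [Xb, Matrix.det_reindex_self]
    exact IsUnit.of_mul_eq_one _ hdet

theorem stmt3 :
    assoc 0 = 1 ∧
      ∀ m : ℕ,
        assoc (m + 1) =
          Matrix.reindex (blockEquiv m) (blockEquiv m)
            (Matrix.fromBlocks (assoc m) (-(assoc m)) 0 ((2 : ℚ) • assoc m)) := by
  constructor
  · simp [assoc, Xb, Xc]
  · intro m
    set R := Matrix.reindex (blockEquiv m) (blockEquiv m)
        (Matrix.fromBlocks (assoc m) (-(assoc m)) 0 ((2 : ℚ) • assoc m)) with hR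
    have hXA : Xb m * assoc m = Xc m := by
      rw [assoc, Matrix.mul_nonsing_inv_cancel_left _ _ (xb_isUnit m)]
    have key : Xb (m + 1) * R = Xc (m + 1) := by
      have h2 : -(Xc m) + (2:ℚ) • Xc m = Xc m := by module
      rw [hR, Xb, Xc, reindex_mul, Matrix.fromBlocks_multiply]
      simp [hXA, Matrix.mul_neg, Matrix.mul_smul, h2]
    haveI := Matrix.invertibleOfIsUnitDet _ (xb_isUnit (m+1))
    rw [assoc, ← key, Matrix.inv_mul_cancel_left_of_invertible]
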